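/- For integers a > b > c ≥ 0, the minimal addition chain length of 2^a + 2^b + 2^c equals a + 2, i.e., ℓ(2^a + 2^b + 2^c) = a + 2. -/

import Mathlib

/-- An addition chain of length `r` for `n`, given by `a : ℕ → ℕ`. -/
def IsAdditionChain (r : ℕ) (a : ℕ → ℕ) (n : ℕ) : Prop :=
  a 0 = 1 ∧ a r = n ∧ (∀ k, k < r → a k < a (k + 1)) ∧
    ∀ k, 1 ≤ k → k ≤ r → ∃ i j, i < k ∧ j < k ∧ a k = a i + a j

/-- Minimal length of an addition chain for `n`. -/
noncomputable def addLen (n : ℕ) : ℕ :=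
  sInf {r | ∃ a : ℕ → ℕ, IsAdditionChain r a n}

lemma tp (n : ℕ) : (2:ℕ)^(n+1) = 2^n + 2^n := by rw [pow_succ]; omega

lemma pow_lt_exp {a b : ℕ} (h : (2:ℕ)^a < 2^b) : a < b :=
  (Nat.pow_lt_pow_iff_right (by norm_num)).mp h

lemma pow_le_exp {a b : ℕ} (h : a ≤ b) : (2:ℕ)^a ≤ 2^b :=
  Nat.pow_le_pow_right (by norm_num) h

lemma exp_lt_pow {a b : ℕ} (h : a < b) : (2:ℕ)^a < 2^b :=
  (Nat.pow_lt_pow_iff_right (by norm_num)).mpr h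

lemma top_exp {m u v : ℕ} (hvu : v ≤ u) (h1 : 2^m < 2^u + 2^v)
    (h2 : 2^u + 2^v ≤ 2^(m+1)) : u = m := by
  have h3 : (2:ℕ)^v ≤ 2^u := pow_le_exp hvu
  have h4 : m < u + 1 := pow_lt_exp (a := m) (b := u+1) (by rw [tp]; omega)
  have h5 : u < m + 1 := by
    have hv : (0:ℕ) < 2^v := Nat.pow_pos (by norm_num)
    exact pow_lt_exp (by omega)
  omega

section Chain
variable {r : ℕ} {x : ℕ → ℕ}
  (hm : ∀ k, k < r → x k < x (k + 1))

include hm in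
lemma chain_mono : ∀ i j, i ≤ j → j ≤ r → x i ≤ x j := by
  intro i j hij hjr
  obtain ⟨d, rfl⟩ := Nat.exists_eq_add_of_le hij
  clear hij
  induction d with
  | zero => rfl
  | succ d ih =>
    have h1 : i + d < r := by omega
    have := hm (i + d) h1
    have := ih (by omega)
    rw [show i + (d+1) = (i+d)+1 from rfl]
    omega

include hm in
lemma chain_smono : ∀ i j, i < j → j ≤ r → x i < x j := by
  intro i j hij hjr
  have h1 := hm i (by omega)
  have h2 := chain_mono hm (i+1) j (by omega) hjr
  omega

variable (h0 : x 0 = 1)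
  (hs : ∀ k, 1 ≤ k → k ≤ r → ∃ i j, i < k ∧ j < k ∧ x k = x i + x j)

omit hm in
include h0 hs in
lemma chain_le_two_pow : ∀ k, k ≤ r → x k ≤ 2 ^ k := by
  intro k
  induction k using Nat.strong_induction_on with
  | _ k ih =>
    match k with
    | 0 => intro _; simp [h0]
    | k + 1 =>
      intro hkr
      obtain ⟨i, j, hi, hj, he⟩ := hs (k+1) (by omega) hkr
      have h1 := ih i hi (by omega)
      have h2 := ih j hj (by omega)
      have h3 : (2:ℕ)^i ≤ 2^k := pow_le_exp (by omega)
      have h4 : (2:ℕ)^j ≤ 2^k := pow_le_exp (by omega)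
      have h5 := tp k
      omega

include hm hs in
lemma chain_ratio : ∀ m d, m + d ≤ r → x (m + d) ≤ 2 ^ d * x m := by
  intro m d
  induction d with
  | zero => intro _; simp
  | succ d ih =>
    intro hr
    obtain ⟨i, j, hi, hj, he⟩ := hs (m+d+1) (by omega) (by omega)
    have h1 : x i ≤ x (m + d) := chain_mono hm i (m+d) (by omega) (by omega)
    have h2 : x j ≤ x (m + d) := chain_mono hm j (m+d) (by omega) (by omega)
    have h3 := ih (by omega)
    have h5 : (2:ℕ)^(d+1) * x m = 2^d * x m + 2^d * x m := by rw [pow_succ]; ring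
    rw [show m + (d+1) = (m+d)+1 from rfl]
    omega

include hm h0 hs in
lemma chain_two_bits : ∀ k, 1 ≤ k → k ≤ r → 2 ^ k < 2 * x k →
    ∃ u v, x k = 2 ^ u + 2 ^ v := by
  intro k
  induction k using Nat.strong_induction_on with
  | _ k ih =>
  intro hk1 hkr hbig
  obtain ⟨i, j, hi, hj, he, hij⟩ :
      ∃ i j, i < k ∧ j < k ∧ x k = x i + x j ∧ x i ≤ x j := by
    obtain ⟨i, j, hi, hj, he⟩ := hs k hk1 hkr
    rcases le_total (x i) (x j) with h | h
    · exact ⟨i, j, hi, hj, he, h⟩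
    · exact ⟨j, i, hj, hi, by omega, h⟩
  obtain rfl | rfl | ⟨m, rfl⟩ : k = 1 ∨ k = 2 ∨ ∃ m, k = m + 3 := by
    rcases Nat.lt_or_ge k 3 with h | h
    · interval_cases k
      · exact Or.inl rfl
      · exact Or.inr (Or.inl rfl)
    · exact Or.inr (Or.inr ⟨k - 3, by omega⟩)
  · have hij0 : i = 0 ∧ j = 0 := by omega
    exact ⟨0, 0, by simp [he, hij0.1, hij0.2, h0]⟩
  · have hx1 : x 1 = 2 := by
      obtain ⟨i', j', hi', hj', he'⟩ := hs 1 le_rfl (by omega)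
      have h' : i' = 0 ∧ j' = 0 := by omega
      simp [he', h'.1, h'.2, h0]
    have hpow : ∀ t, t < 2 → ∃ e, x t = 2 ^ e := by
      intro t ht
      interval_cases t
      · exact ⟨0, by simp [h0]⟩
      · exact ⟨1, by simp [hx1]⟩
    obtain ⟨e1, he1⟩ := hpow i hi
    obtain ⟨e2, he2⟩ := hpow j hj
    exact ⟨e1, e2, by rw [he, he1, he2]⟩
  · have e1 : (2:ℕ)^(m+1) = 2^m + 2^m := tp m
    have e2 : (2:ℕ)^(m+2) = 2^(m+1) + 2^(m+1) := tp (m+1)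
    have e3 : (2:ℕ)^(m+3) = 2^(m+2) + 2^(m+2) := tp (m+2)
    have hxj_le : x j ≤ 2 ^ j := chain_le_two_pow h0 hs j (by omega)
    have hxj_big : 2 ^ (m+1) < x j := by omega
    have hj2 : j = m + 2 := by
      by_contra hne
      have : (2:ℕ)^j ≤ 2^(m+1) := pow_le_exp (by omega)
      omega
    subst hj2
    obtain ⟨u, v, huv⟩ := ih (m+2) (by omega) (by omega) (by omega) (by omega)
    obtain ⟨u, v, hvu, huv⟩ : ∃ u v, v ≤ u ∧ x (m+2) = 2^u + 2^v := by
      rcases le_total v u with h | h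
      · exact ⟨u, v, h, huv⟩
      · exact ⟨v, u, h, by omega⟩
    have hu : u = m + 1 := top_exp hvu (by omega) (by omega)
    subst hu
    have hile : i ≤ m + 2 := by
      by_contra hgt
      have := chain_smono hm (m+2) i (by omega) (by omega)
      omega
    rcases eq_or_lt_of_le hile with hieq | hilt
    · -- i = j : doubling step
      subst hieq
      refine ⟨m+2, v+1, ?_⟩
      have e4 : (2:ℕ)^(v+1) = 2^v + 2^v := tp v
      omega
    · -- i < m + 2
      have hxi_le : x i ≤ 2 ^ i := chain_le_two_pow h0 hs i (by omega)
      rcases eq_or_lt_of_le (show v ≤ m + 1 from hvu) with hveq | hvlt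
      · -- v = m+1 : x (m+2) = 2^(m+2), so earlier elements are powers of 2
        subst hveq
        have hxj : x (m+2) = 2^(m+2) := by omega
        have hratio := chain_ratio hm hs i (m+2-i) (by omega)
        rw [show i + (m+2-i) = m+2 by omega] at hratio
        have hsplit : (2:ℕ)^(m+2) = 2^(m+2-i) * 2^i := by
          rw [← pow_add]; congr 1; omega
        have hpos : 0 < (2:ℕ)^(m+2-i) := Nat.pow_pos (by norm_num)
        have hxi_ge : 2^i ≤ x i :=
          Nat.le_of_mul_le_mul_left (by rw [← hsplit, ← hxj]; exact hratio) hpos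
        exact ⟨i, m+2, by omega⟩
      · -- v ≤ m
        have hv : (2:ℕ)^v ≤ 2^m := pow_le_exp (by omega)
        have hxi_big : 2^m < x i := by omega
        have him : i = m + 1 := by
          have : m < i := pow_lt_exp (by omega)
          omega
        subst him
        obtain ⟨p, w, hpw⟩ := ih (m+1) (by omega) (by omega) (by omega) (by omega)
        obtain ⟨p, w, hwp, hpw⟩ : ∃ p w, w ≤ p ∧ x (m+1) = 2^p + 2^w := by
          rcases le_total w p with h | h
          · exact ⟨p, w, h, hpw⟩
          · exact ⟨w, p, h, by omega⟩
        have hxm1_le : x (m+1) ≤ 2^(m+1) := chain_le_two_pow h0 hs (m+1) (by omega)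
        have hp : p = m := top_exp hwp (by omega) (by omega)
        rw [hp] at hpw hwp
        have hstep := chain_ratio hm hs (m+1) 1 (by omega)
        rw [show m+1+1 = m+2 from rfl, pow_one] at hstep
        have ew : (2:ℕ)^(w+1) = 2^w + 2^w := tp w
        have hvw : (2:ℕ)^v ≤ 2^(w+1) := by omega
        have hwm : (2:ℕ)^w ≤ 2^m := pow_le_exp hwp
        have hkey : 2^m < 2^w + 2^v := by omega
        rcases eq_or_lt_of_le hwp with hweq | hwlt
        · -- w = m
          have hpw' : x (m+1) = 2^m + 2^m := by rw [hweq] at hpw; exact hpw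
          exact ⟨m+2, v, by omega⟩
        · -- w < m : then m = w+1 and v = w+1
          have hw1m : (2:ℕ)^(w+1) ≤ 2^m := pow_le_exp (by omega)
          have ew2 : (2:ℕ)^(w+2) = 2^(w+1) + 2^(w+1) := tp (w+1)
          have hmw : m = w + 1 := by
            have : m < w + 2 := pow_lt_exp (a := m) (b := w+2) (by omega)
            omega
          have hvw' : v = w + 1 := by
            have h1 : w < v := pow_lt_exp (by omega)
            have h2 : v < w + 2 := pow_lt_exp (by omega)
            omega
          subst hmw
          subst hvw'
          have ew3 : (2:ℕ)^(w+4) = 2^(w+3) + 2^(w+3) := tp (w+3)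
          have ew4 : (2:ℕ)^(w+3) = 2^(w+2) + 2^(w+2) := tp (w+2)
          exact ⟨w+3, w, by omega⟩

end Chain

lemma three_ne_two : ∀ c a b u v : ℕ, c < b → b < a →
    2 ^ a + 2 ^ b + 2 ^ c ≠ 2 ^ u + 2 ^ v := by
  intro c
  induction c with
  | zero =>
    intro a b u v hcb hba heq
    obtain ⟨b', rfl⟩ : ∃ b', b = b' + 1 := ⟨b - 1, by omega⟩
    obtain ⟨a', rfl⟩ : ∃ a', a = a' + 1 := ⟨a - 1, by omega⟩
    have ea := tp a'
    have eb := tp b'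
    -- LHS is odd
    rcases u with _ | u' <;> rcases v with _ | v'
    · -- both zero: RHS = 2
      have h1 : (1:ℕ) ≤ 2 ^ b' := Nat.one_le_two_pow
      have h2 : (1:ℕ) ≤ 2 ^ a' := Nat.one_le_two_pow
      simp at heq
      omega
    · -- u = 0, v = v'+1 : 2^a + 2^b = 2^v'
      have ev := tp v'
      have h3 : 2 ^ (a' + 1) + 2 ^ (b' + 1) = 2 ^ (v' + 1) := by
        simp at heq; omega
      have h4 : a' + 1 < v' + 1 := pow_lt_exp (by
        have h1 : (1:ℕ) ≤ 2 ^ (b'+1) := Nat.one_le_two_pow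
        omega)
      have h5 : (2:ℕ) ^ (a' + 2) ≤ 2 ^ (v' + 1) := pow_le_exp (by omega)
      have ea2 : (2:ℕ)^(a'+2) = 2^(a'+1) + 2^(a'+1) := tp (a'+1)
      have h6 : (2:ℕ) ^ (b' + 1) < 2 ^ (a' + 1) := exp_lt_pow (by omega)
      omega
    · -- v = 0, u = u'+1
      have eu := tp u'
      have h3 : 2 ^ (a' + 1) + 2 ^ (b' + 1) = 2 ^ (u' + 1) := by
        simp at heq; omega
      have h4 : a' + 1 < u' + 1 := pow_lt_exp (by
        have h1 : (1:ℕ) ≤ 2 ^ (b'+1) := Nat.one_le_two_pow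
        omega)
      have h5 : (2:ℕ) ^ (a' + 2) ≤ 2 ^ (u' + 1) := pow_le_exp (by omega)
      have ea2 : (2:ℕ)^(a'+2) = 2^(a'+1) + 2^(a'+1) := tp (a'+1)
      have h6 : (2:ℕ) ^ (b' + 1) < 2 ^ (a' + 1) := exp_lt_pow (by omega)
      omega
    · -- both positive: parity contradiction
      have eu := tp u'
      have ev := tp v'
      simp at heq
      omega
  | succ c ih =>
    intro a b u v hcb hba heq
    obtain ⟨b', rfl⟩ : ∃ b', b = b' + 1 := ⟨b - 1, by omega⟩
    obtain ⟨a', rfl⟩ : ∃ a', a = a' + 1 := ⟨a - 1, by omega⟩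
    have ea := tp a'
    have eb := tp b'
    have ec := tp c
    rcases u with _ | u' <;> rcases v with _ | v'
    · have h1 : (1:ℕ) ≤ 2 ^ b' := Nat.one_le_two_pow
      have h2 : (1:ℕ) ≤ 2 ^ a' := Nat.one_le_two_pow
      have h3 : (1:ℕ) ≤ 2 ^ c := Nat.one_le_two_pow
      simp at heq
      omega
    · have ev := tp v'
      have h1 : (1:ℕ) ≤ 2 ^ b' := Nat.one_le_two_pow
      simp at heq
      omega
    · have eu := tp u'
      have h1 : (1:ℕ) ≤ 2 ^ b' := Nat.one_le_two_pow
      simp at heq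
      omega
    · have eu := tp u'
      have ev := tp v'
      exact ih a' b' u' v' (by omega) (by omega) (by omega)

/-- The explicit addition chain: doublings to `2^(p+1)`, add 1, doublings to
`2^(p+q+2)+2^(q+1)`, add 1, then doublings. -/
def chainF (p q : ℕ) : ℕ → ℕ := fun k =>
  if k ≤ p + 1 then 2 ^ k
  else if k ≤ p + q + 3 then 2 ^ (k-1) + 2 ^ (k-1-(p+1))
  else 2 ^ (k-2) + 2 ^ (k-2-(p+1)) + 2 ^ (k-2-(p+q+2))

lemma chainF_eq1 (p q k : ℕ) (h : k ≤ p + 1) : chainF p q k = 2 ^ k := by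
  unfold chainF; rw [if_pos h]

lemma chainF_eq2 (p q k : ℕ) (h1 : p + 1 < k) (h2 : k ≤ p + q + 3) :
    chainF p q k = 2 ^ (k-1) + 2 ^ (k-1-(p+1)) := by
  unfold chainF; rw [if_neg (by omega), if_pos h2]

lemma chainF_eq3 (p q k : ℕ) (h1 : p + q + 3 < k) :
    chainF p q k = 2 ^ (k-2) + 2 ^ (k-2-(p+1)) + 2 ^ (k-2-(p+q+2)) := by
  unfold chainF; rw [if_neg (by omega), if_neg (by omega)]

lemma upper (p q c : ℕ) :
    IsAdditionChain (p+q+c+4) (chainF p q) (2^(p+q+c+2) + 2^(q+c+1) + 2^c) := by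
  refine ⟨chainF_eq1 p q 0 (by omega), ?_, ?_, ?_⟩
  · rw [chainF_eq3 p q _ (by omega)]
    rw [show p+q+c+4-2-(p+q+2) = c by omega, show p+q+c+4-2-(p+1) = q+c+1 by omega, show p+q+c+4-2 = p+q+c+2 by omega]
  · -- strictly increasing
    intro k hk
    by_cases h1 : k + 1 ≤ p + 1
    · rw [chainF_eq1 p q k (by omega), chainF_eq1 p q (k+1) h1]
      exact exp_lt_pow (by omega)
    · by_cases h2 : k ≤ p + 1
      · -- k = p + 1
        have hk' : k = p + 1 := by omega
        subst hk'
        rw [chainF_eq1 p q (p+1) le_rfl, chainF_eq2 p q (p+2) (by omega) (by omega)]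
        rw [show p+2-1-(p+1) = 0 by omega, show p+2-1 = p+1 by omega]
        simp
      · by_cases h3 : k + 1 ≤ p + q + 3
        · obtain ⟨i, rfl⟩ : ∃ i, k = p + 2 + i := ⟨k - (p+2), by omega⟩
          rw [chainF_eq2 p q _ (by omega) (by omega),
            chainF_eq2 p q (p+2+i+1) (by omega) (by omega)]
          rw [show p+2+i+1-1-(p+1) = i+1 by omega, show p+2+i-1-(p+1) = i by omega, show p+2+i+1-1 = p+2+i by omega, show p+2+i-1 = p+1+i by omega]
          exact Nat.add_lt_add (exp_lt_pow (by omega)) (exp_lt_pow (by omega))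
        · by_cases h4 : k ≤ p + q + 3
          · -- k = p + q + 3
            have hk' : k = p + q + 3 := by omega
            subst hk'
            rw [chainF_eq2 p q _ (by omega) (by omega),
              chainF_eq3 p q (p+q+3+1) (by omega)]
            rw [show p+q+3+1-2-(p+q+2) = 0 by omega, show p+q+3+1-2-(p+1) = q+1 by omega, show p+q+3-1-(p+1) = q+1 by omega, show p+q+3+1-2 = p+q+2 by omega, show p+q+3-1 = p+q+2 by omega]
            simp
          · obtain ⟨i, rfl⟩ : ∃ i, k = p + q + 4 + i := ⟨k - (p+q+4), by omega⟩
            rw [chainF_eq3 p q _ (by omega), chainF_eq3 p q (p+q+4+i+1) (by omega)]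
            rw [show p+q+4+i+1-2-(p+q+2) = i+1 by omega, show p+q+4+i-2-(p+q+2) = i by omega, show p+q+4+i+1-2-(p+1) = q+2+i by omega, show p+q+4+i-2-(p+1) = q+1+i by omega, show p+q+4+i+1-2 = p+q+3+i by omega, show p+q+4+i-2 = p+q+2+i by omega]
            have := exp_lt_pow (show p+q+2+i < p+q+3+i by omega)
            have := exp_lt_pow (show q+1+i < q+2+i by omega)
            have := exp_lt_pow (show i < i+1 by omega)
            omega
  · -- sum property
    intro k hk1 hk2
    by_cases h1 : k ≤ p + 1
    · obtain ⟨k', rfl⟩ : ∃ k', k = k' + 1 := ⟨k - 1, by omega⟩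
      refine ⟨k', k', by omega, by omega, ?_⟩
      rw [chainF_eq1 p q _ h1, chainF_eq1 p q k' (by omega), tp k']
    · by_cases h2 : k ≤ p + 2
      · -- k = p + 2
        have hk' : k = p + 2 := by omega
        subst hk'
        refine ⟨p+1, 0, by omega, by omega, ?_⟩
        rw [chainF_eq2 p q _ (by omega) (by omega), chainF_eq1 p q (p+1) le_rfl,
          chainF_eq1 p q 0 (by omega)]
        rw [show p+2-1-(p+1) = 0 by omega, show p+2-1 = p+1 by omega]
      · by_cases h3 : k ≤ p + q + 3
        · obtain ⟨i, rfl⟩ : ∃ i, k = p + 3 + i := ⟨k - (p+3), by omega⟩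
          refine ⟨p+2+i, p+2+i, by omega, by omega, ?_⟩
          rw [chainF_eq2 p q _ (by omega) (by omega),
            chainF_eq2 p q (p+2+i) (by omega) (by omega)]
          rw [show p+3+i-1-(p+1) = i+1 by omega, show p+2+i-1-(p+1) = i by omega, show p+3+i-1 = p+2+i by omega, show p+2+i-1 = p+1+i by omega]
          rw [show p+2+i = (p+1+i)+1 by omega, tp (p+1+i), tp i]
          omega
        · by_cases h4 : k ≤ p + q + 4
          · -- k = p + q + 4
            have hk' : k = p + q + 4 := by omega
            subst hk'
            refine ⟨p+q+3, 0, by omega, by omega, ?_⟩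
            rw [chainF_eq3 p q _ (by omega),
              chainF_eq2 p q (p+q+3) (by omega) (by omega), chainF_eq1 p q 0 (by omega)]
            rw [show p+q+4-2-(p+q+2) = 0 by omega, show p+q+4-2-(p+1) = q+1 by omega, show p+q+3-1-(p+1) = q+1 by omega, show p+q+4-2 = p+q+2 by omega, show p+q+3-1 = p+q+2 by omega]
          · obtain ⟨i, rfl⟩ : ∃ i, k = p + q + 5 + i := ⟨k - (p+q+5), by omega⟩
            refine ⟨p+q+4+i, p+q+4+i, by omega, by omega, ?_⟩
            rw [chainF_eq3 p q _ (by omega), chainF_eq3 p q (p+q+4+i) (by omega)]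
            rw [show p+q+5+i-2-(p+q+2) = i+1 by omega, show p+q+4+i-2-(p+q+2) = i by omega, show p+q+5+i-2-(p+1) = q+2+i by omega, show p+q+4+i-2-(p+1) = q+1+i by omega, show p+q+5+i-2 = p+q+3+i by omega, show p+q+4+i-2 = p+q+2+i by omega]
            rw [show p+q+3+i = (p+q+2+i)+1 by omega, tp (p+q+2+i),
              show q+2+i = (q+1+i)+1 by omega, tp (q+1+i), tp i]
            omega

theorem stmt2 : ∀ a b c : ℕ, c < b → b < a → addLen (2 ^ a + 2 ^ b + 2 ^ c) = a + 2 := by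
  intro a b c hcb hba
  obtain ⟨q, rfl⟩ : ∃ q, b = q + c + 1 := ⟨b - c - 1, by omega⟩
  obtain ⟨p, rfl⟩ : ∃ p, a = p + q + c + 2 := ⟨a - (q + c + 1) - 1, by omega⟩
  rw [show q + c + 1 = q + c + 1 from rfl]
  unfold addLen
  have hmem : (p+q+c+4) ∈ {r | ∃ f : ℕ → ℕ,
      IsAdditionChain r f (2^(p+q+c+2) + 2^(q+c+1) + 2^c)} :=
    ⟨chainF p q, upper p q c⟩
  have hlow : ∀ r ∈ {r | ∃ f : ℕ → ℕ,
      IsAdditionChain r f (2^(p+q+c+2) + 2^(q+c+1) + 2^c)}, p+q+c+4 ≤ r := by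
    intro r hr
    obtain ⟨x, h0, hrn, hm, hs⟩ := hr
    have h1 : (1:ℕ) ≤ 2 ^ (q+c+1) := Nat.one_le_two_pow
    have h2 : (1:ℕ) ≤ 2 ^ c := Nat.one_le_two_pow
    have hle : x r ≤ 2 ^ r := chain_le_two_pow h0 hs r le_rfl
    have hrbig : p + q + c + 2 < r := pow_lt_exp (by omega)
    by_contra hcon
    have hreq : r = p + q + c + 3 := by omega
    subst hreq
    have e3 : (2:ℕ)^(p+q+c+3) = 2^(p+q+c+2) + 2^(p+q+c+2) := tp (p+q+c+2)
    obtain ⟨u, v, huv⟩ := chain_two_bits hm h0 hs (p+q+c+3) (by omega) le_rfl (by omega)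
    exact three_ne_two c (p+q+c+2) (q+c+1) u v (by omega) (by omega) (by omega)
  refine le_antisymm (Nat.sInf_le hmem) (le_csInf ⟨_, hmem⟩ hlow)
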